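/- In the algebra Z_n, for each 1 ≤ i ≤ n and each m ≥ 0, the element (z_i w_i)^m can be written as (z_i w_i)^m = ∑_{k=0}^m c_k z_i^k w_i^k Q_i^{m−k} for some coefficients c_k ∈ ℂ[q²]. -/

import Mathlib

noncomputable section

/-- Free algebra on generators `z_1,…,z_n, w_1,…,w_n`. -/
abbrev FreeZW (n : ℕ) := FreeAlgebra ℂ (Fin n ⊕ Fin n)

/-- Generator `z_i`. -/
def zGen (n : ℕ) (i : Fin n) : FreeZW n := FreeAlgebra.ι ℂ (Sum.inl i)

/-- Generator `w_i`. -/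
def wGen (n : ℕ) (i : Fin n) : FreeZW n := FreeAlgebra.ι ℂ (Sum.inr i)

/-- The defining relations of the quantized algebra of polynomials on `ℂ^n`:
`z_i z_j = q z_j z_i` (i<j), `w_j w_i = q w_i w_j` (i<j), `w_i z_j = q z_j w_i` (i≠j),
`w_i z_i = z_i w_i + (1-q²) ∑_{k<i} z_k w_k`. -/
inductive ZRel (n : ℕ) (q : ℝ) : FreeZW n → FreeZW n → Prop
  | zz {i j : Fin n} (h : i < j) :
      ZRel n q (zGen n i * zGen n j) ((q : ℂ) • (zGen n j * zGen n i))
  | ww {i j : Fin n} (h : i < j) :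
      ZRel n q (wGen n j * wGen n i) ((q : ℂ) • (wGen n i * wGen n j))
  | wz {i j : Fin n} (h : i ≠ j) :
      ZRel n q (wGen n i * zGen n j) ((q : ℂ) • (zGen n j * wGen n i))
  | wzDiag (i : Fin n) :
      ZRel n q (wGen n i * zGen n i)
        (zGen n i * wGen n i +
          (1 - (q : ℂ) ^ 2) • ∑ k ∈ Finset.univ.filter (· < i), zGen n k * wGen n k)

/-- The quantized algebra `Z_n` of polynomials on `ℂ^n`. -/
abbrev ZAlg (n : ℕ) (q : ℝ) := RingQuot (ZRel n q)

/-- The generator `z_i` of `Z_n`. -/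
def zEl (n : ℕ) (q : ℝ) (i : Fin n) : ZAlg n q :=
  RingQuot.mkAlgHom ℂ (ZRel n q) (zGen n i)

/-- The generator `w_i` of `Z_n`. -/
def wEl (n : ℕ) (q : ℝ) (i : Fin n) : ZAlg n q :=
  RingQuot.mkAlgHom ℂ (ZRel n q) (wGen n i)

/-- The monomial `z^λ w^μ = z_1^{λ_1} ⋯ z_n^{λ_n} w_n^{μ_n} ⋯ w_1^{μ_1}` in `Z_n`. -/
def zwMono (n : ℕ) (q : ℝ) (lam mu : Fin n → ℕ) : ZAlg n q :=
  (List.ofFn fun i : Fin n => zEl n q i ^ lam i).prod *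
    (List.ofFn fun i : Fin n => wEl n q i.rev ^ mu i.rev).prod

/-- The central element `Q_i = ∑_{k=1}^{i} z_k w_k` (here `i : ℕ`, summing over the first
`i` indices; `Q_0 = 0`). -/
def QEl (n : ℕ) (q : ℝ) (i : ℕ) : ZAlg n q :=
  ∑ k ∈ Finset.univ.filter (fun k : Fin n => (k : ℕ) < i), zEl n q k * wEl n q k


namespace ZWAux

variable {n : ℕ} {q : ℝ}

lemma zz' {k i : Fin n} (h : k < i) :
    zEl n q k * zEl n q i = (q : ℂ) • (zEl n q i * zEl n q k) := by
  have := RingQuot.mkAlgHom_rel ℂ (ZRel.zz (n := n) (q := q) h)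
  rw [map_mul, map_smul, map_mul] at this; exact this

lemma ww' {k i : Fin n} (h : k < i) :
    wEl n q i * wEl n q k = (q : ℂ) • (wEl n q k * wEl n q i) := by
  have := RingQuot.mkAlgHom_rel ℂ (ZRel.ww (n := n) (q := q) h)
  rw [map_mul, map_smul, map_mul] at this; exact this

lemma wz' {k j : Fin n} (h : k ≠ j) :
    wEl n q k * zEl n q j = (q : ℂ) • (zEl n q j * wEl n q k) := by
  have := RingQuot.mkAlgHom_rel ℂ (ZRel.wz (n := n) (q := q) h)
  rw [map_mul, map_smul, map_mul] at this; exact this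

lemma wzD (i : Fin n) :
    wEl n q i * zEl n q i =
      zEl n q i * wEl n q i + (1 - (q : ℂ) ^ 2) • QEl n q (i : ℕ) := by
  have := RingQuot.mkAlgHom_rel ℂ (ZRel.wzDiag (n := n) (q := q) i)
  rw [map_mul, map_add, map_mul, map_smul, map_sum] at this
  have hs : (Finset.univ.filter (· < i)) =
      Finset.univ.filter (fun k : Fin n => (k : ℕ) < (i : ℕ)) := by
    ext k
    simp only [Finset.mem_filter, Finset.mem_univ, true_and]
    exact Fin.lt_def
  rw [hs] at this
  simp only [map_mul] at this
  exact this

lemma Qsucc (i : Fin n) :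
    QEl n q ((i : ℕ) + 1) = QEl n q (i : ℕ) + zEl n q i * wEl n q i := by
  unfold QEl
  have hset : Finset.univ.filter (fun k : Fin n => (k : ℕ) < (i : ℕ) + 1)
      = insert i (Finset.univ.filter (fun k : Fin n => (k : ℕ) < (i : ℕ))) := by
    ext k
    simp only [Finset.mem_insert, Finset.mem_filter, Finset.mem_univ, true_and, Fin.ext_iff]
    omega
  rw [hset, Finset.sum_insert (by simp), add_comm]

lemma Q'z (i : Fin n) :
    QEl n q (i : ℕ) * zEl n q i = ((q : ℂ) ^ 2) • (zEl n q i * QEl n q (i : ℕ)) := by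
  unfold QEl
  rw [Finset.sum_mul, Finset.mul_sum, Finset.smul_sum]
  refine Finset.sum_congr rfl fun k hk => ?_
  simp only [Finset.mem_filter, Finset.mem_univ, true_and] at hk
  have hki : k < i := by rwa [Fin.lt_def]
  have hne : k ≠ i := ne_of_lt hki
  calc zEl n q k * wEl n q k * zEl n q i
      = zEl n q k * (wEl n q k * zEl n q i) := by rw [mul_assoc]
    _ = zEl n q k * ((q : ℂ) • (zEl n q i * wEl n q k)) := by rw [wz' hne]
    _ = (q : ℂ) • (zEl n q k * zEl n q i * wEl n q k) := by
        rw [mul_smul_comm, mul_assoc]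
    _ = (q : ℂ) • (((q : ℂ) • (zEl n q i * zEl n q k)) * wEl n q k) := by rw [zz' hki]
    _ = ((q : ℂ) ^ 2) • (zEl n q i * (zEl n q k * wEl n q k)) := by
        rw [smul_mul_assoc, smul_smul, mul_assoc, sq]

lemma wQ' (i : Fin n) :
    wEl n q i * QEl n q (i : ℕ) = ((q : ℂ) ^ 2) • (QEl n q (i : ℕ) * wEl n q i) := by
  unfold QEl
  rw [Finset.mul_sum, Finset.sum_mul, Finset.smul_sum]
  refine Finset.sum_congr rfl fun k hk => ?_
  simp only [Finset.mem_filter, Finset.mem_univ, true_and] at hk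
  have hki : k < i := by rwa [Fin.lt_def]
  have hne : i ≠ k := (ne_of_lt hki).symm
  calc wEl n q i * (zEl n q k * wEl n q k)
      = (wEl n q i * zEl n q k) * wEl n q k := by rw [mul_assoc]
    _ = ((q : ℂ) • (zEl n q k * wEl n q i)) * wEl n q k := by rw [wz' hne]
    _ = (q : ℂ) • (zEl n q k * (wEl n q i * wEl n q k)) := by
        rw [smul_mul_assoc, mul_assoc]
    _ = (q : ℂ) • (zEl n q k * ((q : ℂ) • (wEl n q k * wEl n q i))) := by rw [ww' hki]
    _ = ((q : ℂ) ^ 2) • (zEl n q k * wEl n q k * wEl n q i) := by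
        rw [mul_smul_comm, smul_smul, mul_assoc, sq]

lemma Qz (i : Fin n) : Commute (QEl n q ((i : ℕ) + 1)) (zEl n q i) := by
  show _ = _
  rw [Qsucc, add_mul, mul_add, Q'z, mul_assoc, wzD i, mul_add, mul_smul_comm,
    ← mul_assoc]
  module

lemma Qw (i : Fin n) : Commute (QEl n q ((i : ℕ) + 1)) (wEl n q i) := by
  show _ = _
  rw [Qsucc, add_mul, mul_add, wQ' i, ← mul_assoc (wEl n q i), wzD i, add_mul,
    smul_mul_assoc]
  module

lemma wzQ (i : Fin n) :
    wEl n q i * zEl n q i =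
      ((q : ℂ) ^ 2) • (zEl n q i * wEl n q i)
        + (1 - (q : ℂ) ^ 2) • QEl n q ((i : ℕ) + 1) := by
  rw [wzD, Qsucc]
  module

lemma wpow_z (i : Fin n) (k : ℕ) :
    wEl n q i ^ (k + 1) * zEl n q i =
      (((q : ℂ) ^ 2) ^ (k + 1)) • (zEl n q i * wEl n q i ^ (k + 1))
        + (1 - ((q : ℂ) ^ 2) ^ (k + 1)) • (QEl n q ((i : ℕ) + 1) * wEl n q i ^ k) := by
  induction k with
  | zero => simpa using wzQ i
  | succ k ih =>
    have hQw : wEl n q i ^ (k + 1) * QEl n q ((i : ℕ) + 1)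
        = QEl n q ((i : ℕ) + 1) * wEl n q i ^ (k + 1) := ((Qw i).pow_right (k + 1)).symm
    calc wEl n q i ^ (k + 2) * zEl n q i
        = wEl n q i ^ (k + 1) * (wEl n q i * zEl n q i) := by
          rw [pow_succ, mul_assoc]
      _ = wEl n q i ^ (k + 1) *
            (((q : ℂ) ^ 2) • (zEl n q i * wEl n q i)
              + (1 - (q : ℂ) ^ 2) • QEl n q ((i : ℕ) + 1)) := by rw [wzQ i]
      _ = ((q : ℂ) ^ 2) • (wEl n q i ^ (k + 1) * zEl n q i * wEl n q i)
            + (1 - (q : ℂ) ^ 2) • (QEl n q ((i : ℕ) + 1) * wEl n q i ^ (k + 1)) := by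
          rw [mul_add, mul_smul_comm, mul_smul_comm, hQw, mul_assoc]
      _ = ((q : ℂ) ^ 2) • (((((q : ℂ) ^ 2) ^ (k + 1)) • (zEl n q i * wEl n q i ^ (k + 1))
              + (1 - ((q : ℂ) ^ 2) ^ (k + 1)) • (QEl n q ((i : ℕ) + 1) * wEl n q i ^ k))
                * wEl n q i)
            + (1 - (q : ℂ) ^ 2) • (QEl n q ((i : ℕ) + 1) * wEl n q i ^ (k + 1)) := by
          rw [ih]
      _ = (((q : ℂ) ^ 2) ^ (k + 2)) • (zEl n q i * wEl n q i ^ (k + 2))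
            + (1 - ((q : ℂ) ^ 2) ^ (k + 2)) • (QEl n q ((i : ℕ) + 1) * wEl n q i ^ (k + 1)) := by
          rw [add_mul, smul_mul_assoc, smul_mul_assoc, mul_assoc, mul_assoc,
            ← pow_succ, ← pow_succ]
          module

lemma key (i : Fin n) (k j : ℕ) :
    (zEl n q i ^ k * wEl n q i ^ k * QEl n q ((i : ℕ) + 1) ^ j) * (zEl n q i * wEl n q i) =
      (((q : ℂ) ^ 2) ^ k) •
          (zEl n q i ^ (k + 1) * wEl n q i ^ (k + 1) * QEl n q ((i : ℕ) + 1) ^ j)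
        + (1 - ((q : ℂ) ^ 2) ^ k) •
          (zEl n q i ^ k * wEl n q i ^ k * QEl n q ((i : ℕ) + 1) ^ (j + 1)) := by
  have hQz : QEl n q ((i : ℕ) + 1) ^ j * zEl n q i
      = zEl n q i * QEl n q ((i : ℕ) + 1) ^ j := ((Qz i).pow_left j).eq
  have hQw : ∀ s : ℕ, QEl n q ((i : ℕ) + 1) * wEl n q i ^ s
      = wEl n q i ^ s * QEl n q ((i : ℕ) + 1) := fun s => ((Qw i).pow_right s).eq
  have hQw' : ∀ s : ℕ, QEl n q ((i : ℕ) + 1) ^ j * wEl n q i ^ s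
      = wEl n q i ^ s * QEl n q ((i : ℕ) + 1) ^ j :=
    fun s => (((Qw i).pow_left j).pow_right s).eq
  have hmove : QEl n q ((i : ℕ) + 1) ^ j * (zEl n q i * wEl n q i)
      = zEl n q i * wEl n q i * QEl n q ((i : ℕ) + 1) ^ j := by
    rw [← mul_assoc, hQz, mul_assoc, ← pow_one (wEl n q i), hQw' 1, ← mul_assoc, pow_one]
  cases k with
  | zero =>
    simp only [pow_zero, one_mul, mul_one, one_smul, sub_self, zero_smul, add_zero,
      pow_succ, zero_add, pow_one]
    rw [hmove]
  | succ k =>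
    calc (zEl n q i ^ (k + 1) * wEl n q i ^ (k + 1) * QEl n q ((i : ℕ) + 1) ^ j)
          * (zEl n q i * wEl n q i)
        = zEl n q i ^ (k + 1) * ((wEl n q i ^ (k + 1) * zEl n q i) * wEl n q i)
            * QEl n q ((i : ℕ) + 1) ^ j := by
          rw [mul_assoc (zEl n q i ^ (k + 1) * wEl n q i ^ (k + 1)), hmove]
          simp only [mul_assoc]
      _ = zEl n q i ^ (k + 1) *
            (((((q : ℂ) ^ 2) ^ (k + 1)) • (zEl n q i * wEl n q i ^ (k + 1))
              + (1 - ((q : ℂ) ^ 2) ^ (k + 1)) • (QEl n q ((i : ℕ) + 1) * wEl n q i ^ k))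
              * wEl n q i) * QEl n q ((i : ℕ) + 1) ^ j := by rw [wpow_z i k]
      _ = (((q : ℂ) ^ 2) ^ (k + 1)) •
            (zEl n q i ^ (k + 2) * wEl n q i ^ (k + 2) * QEl n q ((i : ℕ) + 1) ^ j)
          + (1 - ((q : ℂ) ^ 2) ^ (k + 1)) •
            (zEl n q i ^ (k + 1) * wEl n q i ^ (k + 1) * QEl n q ((i : ℕ) + 1) ^ (j + 1)) := by
          rw [add_mul, smul_mul_assoc, smul_mul_assoc, mul_add, mul_smul_comm, mul_smul_comm,
            add_mul, smul_mul_assoc, smul_mul_assoc]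
          congr 1
          · rw [mul_assoc (zEl n q i), ← pow_succ, ← mul_assoc (zEl n q i ^ (k+1)),
              ← pow_succ]
          · rw [mul_assoc (QEl n q ((i : ℕ) + 1)), ← pow_succ, hQw (k+1),
              ← mul_assoc (zEl n q i ^ (k+1)),
              mul_assoc (zEl n q i ^ (k+1) * wEl n q i ^ (k+1)),
              ← pow_succ' (QEl n q ((i : ℕ) + 1)) j]

end ZWAux

/-- In `Z_n`: `(z_i w_i)^m = ∑_{k=0}^m c_k z_i^k w_i^k Q_i^{m−k}` for coefficients
`c_k ∈ ℂ[q²]` (polynomials evaluated at `q²`; the paper's `Q_i` is `QEl n q ((i : ℕ)+1)`). -/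
theorem zw_mul_pow_expansion (n : ℕ) (q : ℝ) (h0 : 0 < q) (h1 : q < 1) (i : Fin n) (m : ℕ) :
    ∃ c : ℕ → Polynomial ℂ,
      (zEl n q i * wEl n q i) ^ m =
        ∑ k ∈ Finset.range (m + 1),
          (c k).eval ((q : ℂ) ^ 2) •
            (zEl n q i ^ k * wEl n q i ^ k * QEl n q ((i : ℕ) + 1) ^ (m - k)) := by
  induction m with
  | zero => exact ⟨fun _ => 1, by simp⟩
  | succ m ih =>
    obtain ⟨c, ih⟩ := ih
    classical
    set d : ℕ → Polynomial ℂ := fun k => if k ≤ m then c k else 0 with hd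
    refine ⟨fun k => (if 1 ≤ k then d (k - 1) * Polynomial.X ^ (k - 1) else 0)
      + d k * (1 - Polynomial.X ^ k), ?_⟩
    have hc' : (zEl n q i * wEl n q i) ^ m =
        ∑ k ∈ Finset.range (m + 1), (d k).eval ((q : ℂ) ^ 2) •
          (zEl n q i ^ k * wEl n q i ^ k * QEl n q ((i : ℕ) + 1) ^ (m - k)) := by
      rw [ih]
      refine Finset.sum_congr rfl fun k hk => ?_
      rw [Finset.mem_range] at hk
      simp [hd, Nat.lt_succ_iff.mp hk]
    have hterm : ∀ k ∈ Finset.range (m + 1),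
        ((d k).eval ((q : ℂ) ^ 2) •
            (zEl n q i ^ k * wEl n q i ^ k * QEl n q ((i : ℕ) + 1) ^ (m - k)))
            * (zEl n q i * wEl n q i)
          = ((d k).eval ((q : ℂ) ^ 2) * ((q : ℂ) ^ 2) ^ k) •
              (zEl n q i ^ (k + 1) * wEl n q i ^ (k + 1)
                * QEl n q ((i : ℕ) + 1) ^ (m - k))
            + ((d k).eval ((q : ℂ) ^ 2) * (1 - ((q : ℂ) ^ 2) ^ k)) •
              (zEl n q i ^ k * wEl n q i ^ k
                * QEl n q ((i : ℕ) + 1) ^ (m - k + 1)) := by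
      intro k hk
      rw [smul_mul_assoc, ZWAux.key i k (m - k), smul_add, smul_smul, smul_smul]
    rw [pow_succ, hc', Finset.sum_mul, Finset.sum_congr rfl hterm,
      Finset.sum_add_distrib]
    simp only [Polynomial.eval_add, Polynomial.eval_mul, Polynomial.eval_pow,
      Polynomial.eval_X, Polynomial.eval_one, Polynomial.eval_sub,
      apply_ite (Polynomial.eval ((q : ℂ) ^ 2)), Polynomial.eval_zero, add_smul,
      Finset.sum_add_distrib]
    congr 1
    · rw [Finset.sum_range_succ' _ (m + 1)]
      simp only [show ¬(1 ≤ 0) from by omega, if_false, zero_smul, add_zero,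
        Nat.add_sub_cancel, show ∀ k : ℕ, 1 ≤ k + 1 from fun k => Nat.le_add_left 1 k,
        if_true]
      refine Finset.sum_congr rfl fun k hk => ?_
      rw [Finset.mem_range] at hk
      have he : m + 1 - (k + 1) = m - k := by omega
      rw [he]
    · conv_rhs => rw [Finset.sum_range_succ]
      simp only [show d (m + 1) = 0 from by simp [hd], Polynomial.eval_zero, zero_mul, zero_smul, add_zero]
      refine Finset.sum_congr rfl fun k hk => ?_
      rw [Finset.mem_range] at hk
      have he : m + 1 - k = m - k + 1 := by omega
      rw [he]

end
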